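/- Let G be a connected graph, R ⊆ V(G), and let T₁, ..., T_q be spanning trees of the connected components C₁, ..., C_q of G[R]. If G admits a k-Steiner tree for R, then G admits a k-Steiner tree T for R such that every Tᵢ is a subtree of T. -/

import Mathlib

open SimpleGraph

variable {V : Type*}

def IsSteinerTree (G : SimpleGraph V) (R : Set V) (T : G.Subgraph) : Prop :=
  T.coe.IsTree ∧ R ⊆ T.verts

/-- Pulling back along an injective map preserves acyclicity. -/
lemma aux_comap_isAcyclic {α β : Type*} {f : α → β} (hf : Function.Injective f)
    {G : SimpleGraph β} (hG : G.IsAcyclic) : (G.comap f).IsAcyclic := by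
  intro v c hc
  exact hG (c.map ⟨f, fun h => h⟩) (Walk.IsCycle.map hf hc)

/-- Lift a walk in the spanning coercion of a subgraph to a walk in its coercion. -/
def auxLiftWalk {G : SimpleGraph V} {H : G.Subgraph} :
    ∀ {u v : V} (_p : H.spanningCoe.Walk u v) (hu : u ∈ H.verts) (hv : v ∈ H.verts),
      H.coe.Walk ⟨u, hu⟩ ⟨v, hv⟩
  | _, _, Walk.nil, _, _ => Walk.nil
  | _, _, @Walk.cons _ _ _ w _ h p, hu, hv =>
      Walk.cons (show H.coe.Adj ⟨_, hu⟩ ⟨w, Subgraph.Adj.snd_mem h⟩ from h)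
        (auxLiftWalk p (Subgraph.Adj.snd_mem h) hv)

lemma auxLiftWalk_map {G : SimpleGraph V} {H : G.Subgraph} :
    ∀ {u v : V} (p : H.spanningCoe.Walk u v) (hu : u ∈ H.verts) (hv : v ∈ H.verts),
      (auxLiftWalk p hu hv).map ⟨Subtype.val, fun h => h⟩ = p
  | _, _, Walk.nil, _, _ => by simp [auxLiftWalk]
  | _, _, Walk.cons h p, hu, hv => by
      simp only [auxLiftWalk, Walk.map_cons]
      rw [auxLiftWalk_map p]

lemma aux_spanningCoe_isAcyclic {G : SimpleGraph V} {H : G.Subgraph}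
    (h : H.coe.IsAcyclic) : H.spanningCoe.IsAcyclic := by
  intro v c hc
  have hv : v ∈ H.verts := by
    cases c with
    | nil => exact absurd hc (by simp [Walk.IsCycle])
    | cons hadj p => exact Subgraph.Adj.fst_mem hadj
  refine h (auxLiftWalk c hv hv) ?_
  rw [← Walk.map_isCycle_iff_of_injective (f := (⟨Subtype.val, fun h => h⟩ :
      H.coe →g H.spanningCoe)) Subtype.val_injective, auxLiftWalk_map c hv hv]
  exact hc

/-- Any acyclic subgraph of a finite connected graph extends to a spanning tree. -/
lemma aux_exists_tree_between {α : Type*} [Finite α] {G A : SimpleGraph α}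
    (hG : G.Connected) (hA : A ≤ G) (hAc : A.IsAcyclic) :
    ∃ S : SimpleGraph α, A ≤ S ∧ S ≤ G ∧ S.IsTree := by
  classical
  obtain ⟨S, ⟨hAS, hSG, hSac⟩, hmax⟩ :=
    Set.Finite.exists_maximalFor id {S | A ≤ S ∧ S ≤ G ∧ S.IsAcyclic} (Set.toFinite _)
      ⟨A, le_refl A, hA, hAc⟩
  have key : ∀ {u v : α} (_p : G.Walk u v), ¬ S.Reachable u v →
      ∃ a b, G.Adj a b ∧ ¬ S.Reachable a b := by
    intro u v p
    induction p with
    | nil => intro h; exact absurd (Reachable.refl _) h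
    | @cons u w v h p ih =>
      intro hr
      by_cases hs : S.Reachable u w
      · exact ih (fun hwv => hr (hs.trans hwv))
      · exact ⟨u, w, h, hs⟩
  have hpre : S.Preconnected := by
    intro u v
    by_contra hr
    obtain ⟨a, b, hab, hnr⟩ := key ((hG.preconnected u v).some) hr
    have hne : a ≠ b := hab.ne
    set S' := S ⊔ fromEdgeSet {s(a, b)} with hS'
    have hS'ab : S'.Adj a b := Or.inr (by rw [fromEdgeSet_adj]; exact ⟨rfl, hne⟩)
    have hSab : ¬ S.Adj a b := fun h => hnr h.reachable
    have hdel : S' \ fromEdgeSet {s(a, b)} ≤ S := by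
      intro x y hxy
      rw [sdiff_adj] at hxy
      rcases hxy.1 with h | h
      · exact h
      · exact absurd h hxy.2
    have hS'G : S' ≤ G := by
      refine sup_le hSG ?_
      intro x y hxy
      rw [fromEdgeSet_adj, Set.mem_singleton_iff, Sym2.eq_iff] at hxy
      rcases hxy.1 with ⟨rfl, rfl⟩ | ⟨rfl, rfl⟩
      · exact hab
      · exact hab.symm
    have hS'ac : S'.IsAcyclic := by
      intro w c hc
      by_cases hmem : s(a, b) ∈ c.edges
      · have h2 : (S' \ fromEdgeSet {s(a, b)}).Reachable a b :=
          (adj_and_reachable_delete_edges_iff_exists_cycle.mpr ⟨w, c, hc, hmem⟩).2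
        exact hnr (h2.mono hdel)
      · refine hSac (c.transfer S ?_) (hc.transfer _)
        intro e' he'
        have h1 := c.edges_subset_edgeSet he'
        rw [hS', edgeSet_sup] at h1
        rcases h1 with h1 | h1
        · exact h1
        · rw [edgeSet_fromEdgeSet] at h1
          rw [Set.mem_singleton_iff.mp h1.1] at he'
          exact absurd he' hmem
    have heq : S = S' :=
      le_antisymm le_sup_left (hmax ⟨hAS.trans le_sup_left, hS'G, hS'ac⟩ le_sup_left)
    rw [← heq] at hS'ab
    exact hSab hS'ab
  exact by
    haveI := hG.nonempty
    exact ⟨S, hAS, hSG, ⟨⟨hpre⟩, hSac⟩⟩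

/-- Let `T i` (for `i : Fin q`) be spanning trees of the `q` connected components of `G[R]`.
If `G` admits a `k`-Steiner tree for `R`, then it admits one containing every `T i` as a
subtree. -/
theorem stmt5 [Fintype V] (G : SimpleGraph V) (hG : G.Connected) (R : Set V) (k q : ℕ)
    (T : Fin q → G.Subgraph) (comp : Fin q → (G.induce R).ConnectedComponent)
    (hbij : Function.Bijective comp)
    (htree : ∀ i, (T i).coe.IsTree)
    (hverts : ∀ i, (T i).verts = Subtype.val '' (comp i).supp)
    (hex : ∃ T₀ : G.Subgraph, IsSteinerTree G R T₀ ∧ (T₀.verts \ R).ncard ≤ k) :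
    ∃ T' : G.Subgraph, IsSteinerTree G R T' ∧ (T'.verts \ R).ncard ≤ k ∧ ∀ i, T i ≤ T' := by
  classical
  obtain ⟨T₀, ⟨hT₀tree, hT₀R⟩, hT₀card⟩ := hex
  -- vertex sets of the trees `T i` are pairwise disjoint
  have hdisj : ∀ (i j : Fin q) (x : V), x ∈ (T i).verts → x ∈ (T j).verts → i = j := by
    intro i j x hi hj
    rw [hverts] at hi hj
    obtain ⟨a, ha, hax⟩ := hi
    obtain ⟨b, hb, hbx⟩ := hj
    have hab : a = b := Subtype.val_injective (hax.trans hbx.symm)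
    subst hab
    apply hbij.injective
    rw [ConnectedComponent.mem_supp_iff] at ha hb
    rw [← ha, ← hb]
  have hTR : ∀ i, (T i).verts ⊆ R := by
    intro i
    rw [hverts]
    rintro x ⟨a, _, rfl⟩
    exact a.2
  have hTW : ∀ i, (T i).verts ⊆ T₀.verts := fun i => (hTR i).trans hT₀R
  -- the forest `A` on the vertex set of `T₀`
  let B : Fin q → SimpleGraph T₀.verts := fun i =>
    (T i).spanningCoe.comap (Subtype.val : T₀.verts → V)
  have hBadj : ∀ (i : Fin q) (a b : T₀.verts), (B i).Adj a b ↔ (T i).Adj a b :=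
    fun _ _ _ => Iff.rfl
  have hBac : ∀ i, (B i).IsAcyclic := fun i =>
    aux_comap_isAcyclic Subtype.val_injective (aux_spanningCoe_isAcyclic (htree i).IsAcyclic)
  set A : SimpleGraph T₀.verts := ⨆ i, B i with hA
  have hAac : A.IsAcyclic := by
    intro v c hc
    have hv' : ∃ i, (↑v : V) ∈ (T i).verts := by
      cases c with
      | nil => exact absurd hc (by simp [Walk.IsCycle])
      | cons h p =>
        obtain ⟨i, hi⟩ := iSup_adj.mp h
        exact ⟨i, ((hBadj i _ _).mp hi).fst_mem⟩
    obtain ⟨i, hvi⟩ := hv'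
    have hedges : ∀ {x y : T₀.verts} (p : A.Walk x y), (↑x : V) ∈ (T i).verts →
        ∀ e ∈ p.edges, e ∈ (B i).edgeSet := by
      intro x y p
      induction p with
      | nil => intro _ e he; simp at he
      | @cons x z y h p ih =>
        intro hx e he
        obtain ⟨j, hj⟩ := iSup_adj.mp h
        have hji : j = i := hdisj j i _ ((hBadj j _ _).mp hj).fst_mem hx
        subst hji
        rw [Walk.edges_cons, List.mem_cons] at he
        rcases he with rfl | he
        · exact (B j).mem_edgeSet.mpr hj
        · exact ih (((hBadj j _ _).mp hj).snd_mem) e he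
    exact hBac i (c.transfer (B i) (hedges c hvi)) (hc.transfer _)
  -- the connected ambient graph
  set Gam : SimpleGraph T₀.verts := T₀.coe ⊔ A with hGam
  have hAle : A ≤ Gam := le_sup_right
  have hGamConn : Gam.Connected := hT₀tree.isConnected.mono le_sup_left
  obtain ⟨S, hAS, hSGam, hStree⟩ := aux_exists_tree_between hGamConn hAle hAac
  have hGamG : ∀ (a b : T₀.verts), Gam.Adj a b → G.Adj ↑a ↑b := by
    intro a b h
    rcases h with h | h
    · exact T₀.adj_sub h
    · obtain ⟨i, hi⟩ := iSup_adj.mp h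
      exact (T i).adj_sub ((hBadj i _ _).mp hi)
  let T' : G.Subgraph :=
    { verts := T₀.verts
      Adj := fun x y => ∃ (hx : x ∈ T₀.verts) (hy : y ∈ T₀.verts), S.Adj ⟨x, hx⟩ ⟨y, hy⟩
      adj_sub := by rintro x y ⟨hx, hy, h⟩; exact hGamG _ _ (hSGam h)
      edge_vert := by rintro x y ⟨hx, hy, h⟩; exact hx
      symm := ⟨by rintro x y ⟨hx, hy, h⟩; exact ⟨hy, hx, h.symm⟩⟩ }
  have hcoe : T'.coe = S := by
    ext a b
    constructor
    · rintro ⟨hx, hy, h⟩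
      exact h
    · intro h
      exact ⟨a.2, b.2, h⟩
  refine ⟨T', ⟨by rw [hcoe]; exact hStree, hT₀R⟩, hT₀card, ?_⟩
  intro i
  refine ⟨hTW i, ?_⟩
  intro x y h
  exact ⟨hTW i h.fst_mem, hTW i h.snd_mem,
    hAS (iSup_adj.mpr ⟨i, (hBadj i ⟨x, hTW i h.fst_mem⟩ ⟨y, hTW i h.snd_mem⟩).mpr h⟩)⟩
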